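/- With M_c and K_d as above, the smallest positive integer d for which K_d is represented by M_c is d = 4c − 3. -/

import Mathlib

open Matrix

/-- Square integer matrices of size `n`, used as Gram matrices of lattices. -/
abbrev Mat (n : ℕ) := Matrix (Fin n) (Fin n) ℤ

/-- `G` is the Gram matrix of a positive definite integral lattice:
it is symmetric and `vᵀ G v > 0` for every nonzero integer vector `v`. -/
def PosDefInt {n : ℕ} (G : Mat n) : Prop :=
  G.IsSymm ∧ ∀ v : Fin n → ℤ, v ≠ 0 → 0 < v ⬝ᵥ G.mulVec v

/-- The lattice with Gram matrix `L` represents the lattice with Gram matrix `N`: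
there is an integral matrix `T` (whose rows are the coordinates of the images of
the basis vectors) with `T L Tᵀ = N`. -/
def Represents {m n : ℕ} (L : Mat m) (N : Mat n) : Prop :=
  ∃ T : Matrix (Fin n) (Fin m) ℤ, T * L * T.transpose = N

/-- Isometry of (positive definite) lattices, expressed as mutual representation. -/
def Isom {m n : ℕ} (A : Mat m) (B : Mat n) : Prop :=
  Represents A B ∧ Represents B A

theorem Represents.rfl' {n : ℕ} (A : Mat n) : Represents A A :=
  ⟨1, by simp⟩

theorem Represents.trans' {a b c : ℕ} {A : Mat a} {B : Mat b} {C : Mat c}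
    (h1 : Represents A B) (h2 : Represents B C) : Represents A C := by
  obtain ⟨T1, h1⟩ := h1
  obtain ⟨T2, h2⟩ := h2
  refine ⟨T2 * T1, ?_⟩
  rw [← h2, ← h1]
  simp [Matrix.mul_assoc, Matrix.transpose_mul]

/-- A positive definite integral lattice of rank `n`, given by a Gram matrix. -/
def QLat (n : ℕ) := {G : Mat n // PosDefInt G}

instance latSetoid (n : ℕ) : Setoid (QLat n) where
  r A B := Isom A.1 B.1
  iseqv := ⟨fun A => ⟨Represents.rfl' _, Represents.rfl' _⟩,
    fun h => ⟨h.2, h.1⟩,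
    fun h1 h2 => ⟨h1.1.trans' h2.1, h2.2.trans' h1.2⟩⟩

/-- Isometry classes of positive definite integral lattices of rank `n` (`Φ_n`). -/
def Cls (n : ℕ) := Quotient (latSetoid n)

/-- The isometry class of a lattice. -/
def cls {n : ℕ} (L : QLat n) : Cls n := Quotient.mk _ L

/-- A lattice represents an isometry class. -/
def RepCls {m n : ℕ} (L : QLat m) (c : Cls n) : Prop :=
  ∃ N : QLat n, cls N = c ∧ Represents L.1 N.1

/-- The `n`-exceptional set of `L`: the classes of rank-`n` positive definite
integral lattices not represented by `L`. -/
def ExcSet (n : ℕ) {m : ℕ} (L : QLat m) : Set (Cls n) :=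
  {c : Cls n | ¬ RepCls L c}
/-- Gram matrix of the root lattice `A_n` with respect to the simple roots
`α_j = e_{j-1} - e_j`. -/
def Agram (n : ℕ) : Mat n :=
  Matrix.of fun i j =>
    if i = j then 2
    else if (i : ℕ) + 1 = (j : ℕ) ∨ (j : ℕ) + 1 = (i : ℕ) then -1
    else 0

/-- Gram matrix of the lattice `(A_n ⊥ ℤz) + ℤ([i] + z/(n+1))`, where `Q(z) = k(n+1)`
and `q = (i(n+1-i) + k)/(n+1)` is the norm of the glued vector `[i] + z/(n+1)`:
the Cartan matrix of `A_n` bordered by the row/column `B(α_j, [i]) = δ_{j, n+1-i}`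
with corner entry `q`. -/
def AGlue (n i : ℕ) (q : ℤ) : Mat (n + 1) :=
  Matrix.of fun r c =>
    if hr : (r : ℕ) < n then
      if hc : (c : ℕ) < n then Agram n ⟨r, hr⟩ ⟨c, hc⟩
      else if (r : ℕ) = n - i then 1 else 0
    else
      if hc : (c : ℕ) < n then (if (c : ℕ) = n - i then 1 else 0)
      else q

/-- Gram matrix of `M_c = (A₄ ⊥ ℤz) + ℤ([1] + z/5)` with `Q(z) = 25c - 20`
(the norm of the glued vector is `c`). -/
def Mgram (c : ℤ) : Mat 5 := AGlue 4 1 c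

/-- Gram matrix of `K_d = (A₄ ⊥ ℤw) + ℤ([2] + w/5)` with `Q(w) = 25d - 5`
(the norm of the glued vector is `d + 1`). -/
def Kgram (d : ℤ) : Mat 5 := AGlue 4 2 (d + 1)



lemma Mgram_eq' (c : ℤ) : Mgram c =
    !![2,-1,0,0,0; -1,2,-1,0,0; 0,-1,2,-1,0; 0,0,-1,2,1; 0,0,0,1,c] := by
  ext i j; fin_cases i <;> fin_cases j <;> rfl

lemma Kgram_eq' (d : ℤ) : Kgram d =
    !![2,-1,0,0,0; -1,2,-1,0,0; 0,-1,2,-1,1; 0,0,-1,2,0; 0,0,1,0,d+1] := by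
  ext i j; fin_cases i <;> fin_cases j <;> rfl

lemma det_Mgram' (c : ℤ) : (Mgram c).det = 5*c - 4 := by
  rw [Mgram_eq']
  simp [Matrix.det_succ_row_zero, Fin.sum_univ_succ, Fin.succAbove]
  ring

lemma det_Kgram' (d : ℤ) : (Kgram d).det = 5*d - 1 := by
  rw [Kgram_eq']
  simp [Matrix.det_succ_row_zero, Fin.sum_univ_succ, Fin.succAbove]
  ring

set_option maxHeartbeats 1000000 in
lemma rep_Mc_Kd (c : ℤ) : Represents (Mgram c) (Kgram (4*c-3)) := by
  refine ⟨!![1,0,0,0,0; 0,1,0,0,0; 0,0,1,0,0; 0,0,0,1,0; 0,0,0,-1,2], ?_⟩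
  rw [Mgram_eq', Kgram_eq']
  ext i j
  fin_cases i <;> fin_cases j <;>
    simp [Matrix.mul_apply, Fin.sum_univ_five, Matrix.transpose_apply,
      Matrix.vecHead, Matrix.vecTail] <;>
    ring

set_option maxRecDepth 40000 in
/-- The smallest positive integer `d` for which `K_d` is
represented by `M_c` is `d = 4c - 3`. -/
theorem least_Kd_in_Mc (c : ℤ) (hc : 0 < c) :
    IsLeast {d : ℤ | 0 < d ∧ Represents (Mgram c) (Kgram d)} (4 * c - 3) := by
  constructor
  · exact ⟨by linarith, rep_Mc_Kd c⟩
  · rintro d ⟨hd, T, hT⟩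
    have hdet : (T.det)^2 * (5*c-4) = 5*d-1 := by
      have h0 := congrArg Matrix.det hT
      simp only [Matrix.det_mul, Matrix.det_transpose, det_Mgram', det_Kgram'] at h0
      linear_combination h0
    have h1 : (T.det^2 % 5) * ((5*c-4) % 5) % 5 = (5*d-1) % 5 := by
      rw [← Int.mul_emod, hdet]
    have h2 : (5*c-4) % 5 = 1 := by omega
    rw [h2, mul_one] at h1
    have h5 : T.det^2 % 5 = 4 := by omega
    have ht4 : 4 ≤ (T.det)^2 := by
      rcases (by omega : T.det ≤ -2 ∨ T.det = -1 ∨ T.det = 0 ∨ T.det = 1 ∨ 2 ≤ T.det)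
        with h | h | h | h | h
      · nlinarith [sq_nonneg (T.det + 2)]
      · rw [h] at h5; norm_num at h5
      · rw [h] at h5; norm_num at h5
      · rw [h] at h5; norm_num at h5
      · nlinarith [sq_nonneg (T.det - 2)]
    have hpos : (0:ℤ) ≤ 5*c - 4 := by linarith
    nlinarith [mul_le_mul_of_nonneg_right ht4 hpos]
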